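/- Let d ≥ 1, c > 0, k an integer, and define ρ(x,y) = c‖x−y‖^d on ℝ^d. If x, x', b, b' ∈ ℝ^d satisfy ρ(x,x') ≤ 3^(−d)·(2^(−k) + ρ(x,b)) and ρ(b,b') ≤ 3^(−d)·(2^(−k) + ρ(x,b)), then for any z on the segment between b and b' and any z' on the segment between x and x', one has ‖z' − z‖^d ≥ 3^(−d)·(‖x−b‖^d − c^(−1)·2^(1−k)). -/

import Mathlib

theorem stmt_2 (d : ℕ) (hd : 1 ≤ d) (c : ℝ) (hc : 0 < c) (k : ℤ)
    (x x' b b' : EuclideanSpace ℝ (Fin d))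
    (h1 : c * ‖x - x'‖ ^ d ≤ (3 : ℝ) ^ (-(d : ℤ)) * ((2 : ℝ) ^ (-k) + c * ‖x - b‖ ^ d))
    (h2 : c * ‖b - b'‖ ^ d ≤ (3 : ℝ) ^ (-(d : ℤ)) * ((2 : ℝ) ^ (-k) + c * ‖x - b‖ ^ d)) :
    ∀ t ∈ Set.Icc (0 : ℝ) 1, ∀ t' ∈ Set.Icc (0 : ℝ) 1,
      ∀ z z' : EuclideanSpace ℝ (Fin d),
      z = b + t • (b' - b) → z' = x + t' • (x' - x) →
      ‖z' - z‖ ^ d ≥ (3 : ℝ) ^ (-(d : ℤ)) * (‖x - b‖ ^ d - c⁻¹ * (2 : ℝ) ^ (1 - k)) := by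
  intro t ht t' ht' z z' hz hz'
  have hd0 : d ≠ 0 := by omega
  set a := ‖x - b‖ with ha
  have ha0 : 0 ≤ a := norm_nonneg _
  obtain ⟨S, hSdef⟩ : ∃ S : ℝ, S = c⁻¹ * (2:ℝ) ^ (-k) + a ^ d := ⟨_, rfl⟩
  have hS0 : (0:ℝ) ≤ S := by rw [hSdef]; positivity
  obtain ⟨u, hu⟩ : ∃ u : ℝ, u = S ^ ((d:ℝ)⁻¹) := ⟨_, rfl⟩
  have hu0 : 0 ≤ u := hu ▸ Real.rpow_nonneg hS0 _
  have hud : u ^ d = S := by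
    rw [hu, ← Real.rpow_natCast (S ^ ((d:ℝ)⁻¹)) d, ← Real.rpow_mul hS0]
    rw [inv_mul_cancel₀ (by exact_mod_cast hd0), Real.rpow_one]
  have h3 : (3:ℝ) ^ (-(d:ℤ)) = ((3:ℝ) ^ d)⁻¹ := by
    rw [zpow_neg, zpow_natCast]
  have h3d : (0:ℝ) < (3:ℝ) ^ d := by positivity
  have hcS : c * S = (2:ℝ) ^ (-k) + c * a ^ d := by
    rw [hSdef]; field_simp
  -- bounds on the two displacement norms
  have key : ∀ w : EuclideanSpace ℝ (Fin d),
      c * ‖w‖ ^ d ≤ (3 : ℝ) ^ (-(d : ℤ)) * ((2 : ℝ) ^ (-k) + c * a ^ d) → ‖w‖ ≤ u / 3 := by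
    intro w hw
    have hwd : ‖w‖ ^ d ≤ (u / 3) ^ d := by
      rw [div_pow, hud]
      rw [← hcS, h3] at hw
      have heq : c * (S / 3 ^ d) = (3 ^ d)⁻¹ * (c * S) := by ring
      have := (mul_le_mul_iff_right₀ hc).mp (by linarith [hw, heq] : c * ‖w‖ ^ d ≤ c * (S / 3 ^ d))
      linarith [this]
    exact le_of_pow_le_pow_left₀ hd0 (by positivity) hwd
  have he1 : ‖x - x'‖ ≤ u / 3 := key _ h1
  have he2 : ‖b - b'‖ ≤ u / 3 := key _ h2
  -- a ≤ u
  have hau : a ≤ u := by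
    have h' : a ^ d ≤ u ^ d := by
      rw [hud, hSdef]
      have hp : (0:ℝ) ≤ c⁻¹ * (2:ℝ) ^ (-k) := by positivity
      linarith
    exact le_of_pow_le_pow_left₀ hd0 hu0 h'
  -- triangle inequality: a ≤ ‖z' - z‖ + ‖x-x'‖ + ‖b-b'‖
  have hvec : x - b = (z' - z) + (t • (b' - b) - t' • (x' - x)) := by
    rw [hz, hz']; module
  have htri : a ≤ ‖z' - z‖ + ‖x - x'‖ + ‖b - b'‖ := by
    have h4 : a ≤ ‖z' - z‖ + ‖t • (b' - b) - t' • (x' - x)‖ := by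
      rw [ha, hvec]; exact norm_add_le _ _
    have h5 : ‖t • (b' - b) - t' • (x' - x)‖ ≤ ‖t • (b' - b)‖ + ‖t' • (x' - x)‖ :=
      norm_sub_le _ _
    have h6 : ‖t • (b' - b)‖ ≤ ‖b - b'‖ := by
      rw [norm_smul, Real.norm_eq_abs, abs_of_nonneg ht.1, ← norm_neg, neg_sub]
      nlinarith [norm_nonneg (b - b'), ht.1, ht.2]
    have h7 : ‖t' • (x' - x)‖ ≤ ‖x - x'‖ := by
      rw [norm_smul, Real.norm_eq_abs, abs_of_nonneg ht'.1, ← norm_neg, neg_sub]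
      nlinarith [norm_nonneg (x - x'), ht'.1, ht'.2]
    linarith
  -- rewrite target RHS
  have hrhs : a ^ d - c⁻¹ * (2:ℝ) ^ (1 - k) = 3 * a ^ d - 2 * S := by
    rw [hSdef]
    have : (2:ℝ) ^ (1 - k) = 2 * (2:ℝ) ^ (-k) := by
      rw [sub_eq_add_neg, zpow_add₀ (by norm_num : (2:ℝ) ≠ 0), zpow_one]
    rw [this]; ring
  rw [hrhs, h3, ge_iff_le]
  by_cases hcase : 3 * a ^ d ≤ 2 * S
  · have : ((3:ℝ) ^ d)⁻¹ * (3 * a ^ d - 2 * S) ≤ 0 := by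
      apply mul_nonpos_of_nonneg_of_nonpos (by positivity); linarith
    calc ((3:ℝ) ^ d)⁻¹ * (3 * a ^ d - 2 * S) ≤ 0 := this
      _ ≤ ‖z' - z‖ ^ d := by positivity
  · push_neg at hcase
    -- u < 3a/2, set v = 3a - 2u ≥ 0
    have huval : u < 3 / 2 * a := by
      have h32 : (3/2 : ℝ) ≤ (3/2 : ℝ) ^ d := by
        calc (3/2:ℝ) = (3/2)^1 := (pow_one _).symm
          _ ≤ (3/2)^d := pow_le_pow_right₀ (by norm_num) hd
      have : u ^ d < (3 / 2 * a) ^ d := by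
        rw [hud, mul_pow]
        have hstep : (3/2:ℝ) * a ^ d ≤ (3/2:ℝ) ^ d * a ^ d :=
          mul_le_mul_of_nonneg_right h32 (pow_nonneg ha0 d)
        linarith
      exact lt_of_pow_lt_pow_left₀ d (by positivity) this
    have hv0 : 0 ≤ 3 * a - 2 * u := by linarith
    -- convexity: 3 a^d ≤ 2 u^d + (3a - 2u)^d
    have hconv : a ^ d ≤ (2/3 : ℝ) * u ^ d + (1/3 : ℝ) * (3 * a - 2 * u) ^ d := by
      have := (convexOn_pow d).2 (Set.mem_Ici.mpr hu0) (Set.mem_Ici.mpr hv0)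
        (by norm_num : (0:ℝ) ≤ 2/3) (by norm_num : (0:ℝ) ≤ 1/3) (by norm_num)
      have hcomb : (2/3:ℝ) • u + (1/3:ℝ) • (3 * a - 2 * u) = a := by
        simp only [smul_eq_mul]; ring
      rw [hcomb] at this
      simpa [smul_eq_mul] using this
    -- ‖z' - z‖ ≥ (3a - 2u)/3
    have hnorm : (3 * a - 2 * u) / 3 ≤ ‖z' - z‖ := by linarith
    have hfin : ((3 * a - 2 * u) / 3) ^ d ≤ ‖z' - z‖ ^ d :=
      pow_le_pow_left₀ (by positivity) hnorm d
    rw [div_pow] at hfin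
    rw [hud] at hconv
    calc ((3:ℝ) ^ d)⁻¹ * (3 * a ^ d - 2 * S)
        ≤ ((3:ℝ) ^ d)⁻¹ * ((3 * a - 2 * u) ^ d) := by
          apply mul_le_mul_of_nonneg_left _ (by positivity)
          linarith
      _ = (3 * a - 2 * u) ^ d / 3 ^ d := by ring
      _ ≤ ‖z' - z‖ ^ d := hfin
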